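/- Let 𝒯 be a category, 𝒫 a full subcategory of 𝒯, X an object of 𝒯, and suppose given 𝒫-expansion data for X: a directed preordered set Λ, an inverse system (X_λ, p_{λλ'}, Λ) with all X_λ in 𝒫, and morphisms p_λ : X → X_λ with p_{λλ'} ∘ p_{λ'} = p_λ for λ ≤ λ', satisfying conditions (AE1) and (AE2). If the comma category X_𝒫 of X over 𝒫 is a uniformly movable category, then the inverse system (X_λ, p_{λλ'}, Λ) is uniformly movable. -/

import Mathlib

open CategoryTheory

/-- An object `X` of a category is *movable* if there exist an object `M` and a morphism
`m : M ⟶ X` such that every morphism `p : Y ⟶ X` admits `u : M ⟶ Y` with `u ≫ p = m`. -/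
def Movable {K : Type*} [Category K] (X : K) : Prop :=
  ∃ (M : K) (m : M ⟶ X), ∀ (Y : K) (p : Y ⟶ X), ∃ u : M ⟶ Y, u ≫ p = m

/-- An object `X` of a category is *uniformly movable* if there exist an object `M`, a morphism
`m : M ⟶ X`, and an assignment `u` sending each `p : Y ⟶ X` to `u Y p : M ⟶ Y` with
(1) `u Y p ≫ p = m` and (2) `u Y p = u Z q ≫ r` whenever `r ≫ p = q`. -/
def UniformlyMovable {K : Type*} [Category K] (X : K) : Prop :=
  ∃ (M : K) (m : M ⟶ X) (u : ∀ Y : K, (Y ⟶ X) → (M ⟶ Y)),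
    (∀ (Y : K) (p : Y ⟶ X), u Y p ≫ p = m) ∧
    (∀ (Y Z : K) (p : Y ⟶ X) (q : Z ⟶ X) (r : Z ⟶ Y), r ≫ p = q → u Y p = u Z q ≫ r)

/-- Auxiliary: the object of the comma category `X_𝒫` given by `f : X ⟶ Q` with `Q ∈ 𝒫`. -/
def commaObj {T : Type*} [Category T] (P : T → Prop) (X : T) (Q : T) (hQ : P Q)
    (f : X ⟶ Q) : StructuredArrow X (ObjectProperty.ι P) :=
  StructuredArrow.mk (show X ⟶ (ObjectProperty.ι P).obj ⟨Q, hQ⟩ from f)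

/-- Auxiliary: morphisms of the comma category `X_𝒫`. -/
def commaHom {T : Type*} [Category T] {P : T → Prop} {X : T} {Q Q' : T} {hQ : P Q}
    {hQ' : P Q'} {f : X ⟶ Q} {f' : X ⟶ Q'} (g : Q ⟶ Q') (w : f ≫ g = f') :
    commaObj P X Q hQ f ⟶ commaObj P X Q' hQ' f' :=
  StructuredArrow.homMk (ObjectProperty.homMk g) w

@[simp] lemma commaHom_right {T : Type*} [Category T] {P : T → Prop} {X : T} {Q Q' : T}
    {hQ : P Q} {hQ' : P Q'} {f : X ⟶ Q} {f' : X ⟶ Q'} (g : Q ⟶ Q') (w : f ≫ g = f') :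
    (commaHom (hQ := hQ) (hQ' := hQ') g w).right.hom = g := rfl

lemma commaHom_ext {T : Type*} [Category T] {P : T → Prop} {X : T}
    {A : StructuredArrow X (ObjectProperty.ι P)} {Q : T} {hQ : P Q} {f : X ⟶ Q}
    (a b : A ⟶ commaObj P X Q hQ f) (h : a.right.hom = b.right.hom) : a = b :=
  StructuredArrow.hom_ext a b (InducedCategory.hom_ext h)

/-- If the comma category `X_𝒫` of `X` over a full subcategory `𝒫` is a uniformly movable
category, then any inverse system forming a `𝒫`-expansion of `X` is uniformly movable. -/
theorem system_uniformlyMovable_of_comma_uniformlyMovable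
    {T : Type*} [Category T] (P : T → Prop) (X : T)
    {Λ : Type*} [Preorder Λ] [IsDirected Λ (· ≤ ·)]
    (XX : Λ → T) (hXP : ∀ l : Λ, P (XX l))
    (bond : ∀ {l l' : Λ}, l ≤ l' → (XX l' ⟶ XX l))
    (bond_refl : ∀ l : Λ, bond (le_refl l) = 𝟙 (XX l))
    (bond_comp : ∀ {l l' l'' : Λ} (h : l ≤ l') (h' : l' ≤ l''),
      bond h' ≫ bond h = bond (h.trans h'))
    (pp : ∀ l : Λ, X ⟶ XX l)
    (pp_comp : ∀ {l l' : Λ} (h : l ≤ l'), pp l' ≫ bond h = pp l)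
    (AE1 : ∀ (Q : T), P Q → ∀ f : X ⟶ Q, ∃ (l : Λ) (fl : XX l ⟶ Q), pp l ≫ fl = f)
    (AE2 : ∀ (l : Λ) (Q : T), P Q → ∀ f g : XX l ⟶ Q, pp l ≫ f = pp l ≫ g →
      ∃ (l' : Λ) (h : l ≤ l'), bond h ≫ f = bond h ≫ g)
    (hcomma : ∀ Y : StructuredArrow X (ObjectProperty.ι P), UniformlyMovable Y) :
    ∀ l : Λ, ∃ (ml : Λ) (h : l ≤ ml) (r : ∀ ν : Λ, XX ml ⟶ XX ν),
      (∀ (ν ν' : Λ) (h' : ν ≤ ν'), r ν' ≫ bond h' = r ν) ∧ r l = bond h := by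
  intro l
  classical
  obtain ⟨M, m, u, hu1, hu2⟩ := hcomma (commaObj P X (XX l) (hXP l) (pp l))
  obtain ⟨μ, fμ, hfμ⟩ := AE1 M.right.obj M.right.property M.hom
  obtain ⟨μ', hμμ', hlμ'⟩ := directed_of (· ≤ ·) μ l
  have hmw : M.hom ≫ m.right.hom = pp l := StructuredArrow.w m
  have hw : pp μ' ≫ (bond hμμ' ≫ fμ ≫ m.right.hom) = pp μ' ≫ bond hlμ' := by
    rw [pp_comp hlμ', ← Category.assoc, pp_comp hμμ', ← Category.assoc, hfμ]
    exact hmw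
  obtain ⟨ml, hμ'ml, hbond⟩ := AE2 μ' (XX l) (hXP l) _ _ hw
  set g : XX ml ⟶ M.right.obj := bond (hμμ'.trans hμ'ml) ≫ fμ with hgdef
  have hg : g ≫ m.right.hom = bond (hlμ'.trans hμ'ml) := by
    rw [hgdef, ← bond_comp hμμ' hμ'ml, ← bond_comp hlμ' hμ'ml]
    simp only [Category.assoc] at hbond ⊢
    exact hbond
  -- comma objects and morphisms to the base object
  let Y : ∀ κ : Λ, StructuredArrow X (ObjectProperty.ι P) :=
    fun κ => commaObj P X (XX κ) (hXP κ) (pp κ)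
  let q : ∀ (κ : Λ), l ≤ κ → (Y κ ⟶ Y l) :=
    fun κ hlκ => commaHom (bond hlκ) (pp_comp hlκ)
  let U : ∀ (κ : Λ), l ≤ κ → (M.right.obj ⟶ XX κ) :=
    fun κ hlκ => (u (Y κ) (q κ hlκ)).right.hom
  -- key: independence of the choice of κ
  have key : ∀ (ν κ κ' : Λ) (hlκ : l ≤ κ) (hνκ : ν ≤ κ) (hκκ' : κ ≤ κ'),
      U κ hlκ ≫ bond hνκ = U κ' (hlκ.trans hκκ') ≫ bond (hνκ.trans hκκ') := by
    intro ν κ κ' hlκ hνκ hκκ'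
    have hρ : (commaHom (bond hκκ') (pp_comp hκκ') : Y κ' ⟶ Y κ) ≫ q κ hlκ
        = q κ' (hlκ.trans hκκ') := by
      apply commaHom_ext
      show bond hκκ' ≫ bond hlκ = bond (hlκ.trans hκκ')
      exact bond_comp hlκ hκκ'
    have h2 := hu2 (Y κ) (Y κ') (q κ hlκ) (q κ' (hlκ.trans hκκ')) _ hρ
    have h3 := congrArg CommaMorphism.right h2
    rw [Comma.comp_right] at h3
    replace h3 := congrArg (fun φ => φ.hom) h3
    have h4 : U κ hlκ = U κ' (hlκ.trans hκκ') ≫ bond hκκ' := h3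
    rw [h4, Category.assoc, bond_comp]
  -- the value of `u` at the base index
  have key0 : ∀ (κ : Λ) (hlκ : l ≤ κ),
      U κ hlκ ≫ bond hlκ = (m.right.hom : M.right.obj ⟶ XX l) := by
    intro κ hlκ
    have hm : u (Y l) (𝟙 (Y l)) = m := by
      have := hu1 (Y l) (𝟙 (Y l))
      simpa using this
    have h2 := hu2 (Y l) (Y κ) (𝟙 (Y l)) (q κ hlκ) (q κ hlκ) (Category.comp_id _)
    rw [hm] at h2
    have h3 := congrArg CommaMorphism.right h2
    rw [Comma.comp_right] at h3
    exact (congrArg (fun φ => φ.hom) h3).symm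
  choose σ hσ₁ hσ₂ using fun ν => directed_of (· ≤ ·) ν l
  refine ⟨ml, hlμ'.trans hμ'ml,
    fun ν => g ≫ U (σ ν) (hσ₂ ν) ≫ bond (hσ₁ ν), ?_, ?_⟩
  · intro ν ν' h'
    dsimp only
    obtain ⟨τ, hτ₁, hτ₂⟩ := directed_of (· ≤ ·) (σ ν) (σ ν')
    rw [key ν (σ ν) τ (hσ₂ ν) (hσ₁ ν) hτ₁, key ν' (σ ν') τ (hσ₂ ν') (hσ₁ ν') hτ₂]
    rw [Category.assoc, Category.assoc, Category.assoc, bond_comp, hgdef, Category.assoc]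
  · dsimp only
    have hk := key0 (σ l) (hσ₂ l)
    rw [Category.assoc] at *
    rw [hk]
    exact hg
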